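/- arXiv:2003.11181 — 2 statements merged into one kernel-verified Lean document; each statement's English description precedes it below -/
import Mathlib

section
/- Let (U, Z) be a random vector in ℝ^{m_u} × ℝ^{m_z} with joint Lebesgue density f₀, let Y be a real random variable whose conditional density given (U, Z) = (u, z) with respect to Lebesgue measure is p(y | u, z), and let R ∈ {0,1} satisfy Assumption A2 with E[R | Y, U, Z] = π(Y, U) almost surely for a measurable function π with values in [0, 1]. Let a : ℝ × ℝ^{m_u} × ℝ^{m_z} → ℝ^p be measurable with ∫∫∫ ‖a(y,u,z)‖ p(y|u,z) f₀(u,z) dy du dz < ∞, and define A(y, u) = ∫ a(y, u, ζ) p(y | u, ζ) f₀(u, ζ) dζ / ∫ p(y | u, ζ) f₀(u, ζ) dζ wherever the denominator is positive and finite (which holds almost everywhere under the law of (Y, U)). Then E[R · (a(Y, U, Z) − A(Y, U))] = 0. In particular, taking a = ∇_β log p(· | ·, ·; β₀), the first-order derivative h(β₀, F₀) of the pseudolikelihood of Zhao and Shao (2015) has expectation zero at the true parameter. -/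
open MeasureTheory ProbabilityTheory
open scoped NNReal ENNReal

noncomputable section

/-- mean-zero property of the pseudo-score of Zhao--Shao, the
unbiasedness underlying the estimator `β̃` of Section 2.4 of the paper. Suppose
`(U, Z)` has joint density `f₀`, `Y` has conditional density `p(y | u, z)` given
`(U, Z) = (u, z)` (so `(Y, U, Z)` has joint density `p · f₀`), and `R ∈ {0, 1}` follows
Assumption A2: `E[R | Y, U, Z] = π(Y, U)` a.s. with `π` valued in `[0, 1]`. For an
integrable `ℝ^p`-valued `a`, put
`A(y, u) = ∫ a(y, u, ζ) p(y | u, ζ) f₀(u, ζ) dζ / ∫ p(y | u, ζ) f₀(u, ζ) dζ`.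
Then `E[R (a(Y, U, Z) − A(Y, U))] = 0`. -/
theorem pseudo_score_mean_zero
    {Ω : Type*} [MeasurableSpace Ω] (P : Measure Ω) [IsProbabilityMeasure P]
    {mu mz p' : ℕ}
    (Y : Ω → ℝ) (U : Ω → Fin mu → ℝ) (Z : Ω → Fin mz → ℝ) (R : Ω → ℝ)
    (hYmeas : Measurable Y) (hUmeas : Measurable U) (hZmeas : Measurable Z)
    (hRmeas : Measurable R)
    (hR01 : ∀ ω, R ω = 0 ∨ R ω = 1)
    (p : ℝ → (Fin mu → ℝ) → (Fin mz → ℝ) → ℝ)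
    (f₀ : (Fin mu → ℝ) → (Fin mz → ℝ) → ℝ)
    (hpmeas : Measurable fun x : ℝ × (Fin mu → ℝ) × (Fin mz → ℝ) => p x.1 x.2.1 x.2.2)
    (hf₀meas : Measurable fun x : (Fin mu → ℝ) × (Fin mz → ℝ) => f₀ x.1 x.2)
    (hpnonneg : ∀ y u z, 0 ≤ p y u z) (hf₀nonneg : ∀ u z, 0 ≤ f₀ u z)
    (hpcond : ∀ u z, ∫ y, p y u z = 1)
    (hjoint : Measure.map (fun ω => (Y ω, U ω, Z ω)) P =
      (volume : Measure (ℝ × (Fin mu → ℝ) × (Fin mz → ℝ))).withDensity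
        (fun x => ENNReal.ofReal (p x.1 x.2.1 x.2.2 * f₀ x.2.1 x.2.2)))
    (hmarg : Measure.map (fun ω => (U ω, Z ω)) P =
      (volume : Measure ((Fin mu → ℝ) × (Fin mz → ℝ))).withDensity
        (fun x => ENNReal.ofReal (f₀ x.1 x.2)))
    (π : ℝ → (Fin mu → ℝ) → ℝ)
    (hπmeas : Measurable fun x : ℝ × (Fin mu → ℝ) => π x.1 x.2)
    (hπrange : ∀ y u, π y u ∈ Set.Icc (0 : ℝ) 1)
    (hA2 : MeasureTheory.condExp
        (MeasurableSpace.comap (fun ω => (Y ω, U ω, Z ω)) inferInstance) P R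
      =ᵐ[P] fun ω => π (Y ω) (U ω))
    (a : ℝ → (Fin mu → ℝ) → (Fin mz → ℝ) → Fin p' → ℝ)
    (hameas : Measurable fun x : ℝ × (Fin mu → ℝ) × (Fin mz → ℝ) => a x.1 x.2.1 x.2.2)
    (haint : (∫⁻ x : ℝ × (Fin mu → ℝ) × (Fin mz → ℝ),
      ENNReal.ofReal (‖a x.1 x.2.1 x.2.2‖ * (p x.1 x.2.1 x.2.2 * f₀ x.2.1 x.2.2))) < ⊤)
    (A : ℝ → (Fin mu → ℝ) → Fin p' → ℝ)
    (hA : ∀ y u, A y u =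
      (∫ ζ, p y u ζ * f₀ u ζ)⁻¹ • ∫ ζ, (p y u ζ * f₀ u ζ) • a y u ζ) :
    ∫ ω, R ω • (a (Y ω) (U ω) (Z ω) - A (Y ω) (U ω)) ∂P = 0 := by
  classical
  -- basic abbreviations and measurability
  have hT : Measurable fun ω => (Y ω, U ω, Z ω) := hYmeas.prodMk (hUmeas.prodMk hZmeas)
  set d : ℝ × (Fin mu → ℝ) × (Fin mz → ℝ) → ℝ :=
    fun x => p x.1 x.2.1 x.2.2 * f₀ x.2.1 x.2.2 with hd_def
  have hd_meas : Measurable d := hpmeas.mul (hf₀meas.comp measurable_snd)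
  have hd_nonneg : ∀ x, 0 ≤ d x := fun x => mul_nonneg (hpnonneg _ _ _) (hf₀nonneg _ _)
  -- measurability of A
  have hreassoc : Measurable fun w : (ℝ × (Fin mu → ℝ)) × (Fin mz → ℝ) =>
      (w.1.1, w.1.2, w.2) :=
    (measurable_fst.fst).prodMk ((measurable_fst.snd).prodMk measurable_snd)
  have hD_meas : Measurable fun yu : ℝ × (Fin mu → ℝ) => ∫ ζ, p yu.1 yu.2 ζ * f₀ yu.2 ζ := by
    have : Measurable fun w : (ℝ × (Fin mu → ℝ)) × (Fin mz → ℝ) =>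
        p w.1.1 w.1.2 w.2 * f₀ w.1.2 w.2 := hd_meas.comp hreassoc
    exact this.stronglyMeasurable.integral_prod_right'.measurable
  have hI_meas : Measurable fun yu : ℝ × (Fin mu → ℝ) =>
      ∫ ζ, (p yu.1 yu.2 ζ * f₀ yu.2 ζ) • a yu.1 yu.2 ζ := by
    have : Measurable fun w : (ℝ × (Fin mu → ℝ)) × (Fin mz → ℝ) =>
        (p w.1.1 w.1.2 w.2 * f₀ w.1.2 w.2) • a w.1.1 w.1.2 w.2 :=
      (hd_meas.comp hreassoc).smul (hameas.comp hreassoc)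
    exact this.stronglyMeasurable.integral_prod_right'.measurable
  have hA_meas : Measurable fun yu : ℝ × (Fin mu → ℝ) => A yu.1 yu.2 := by
    have : (fun yu : ℝ × (Fin mu → ℝ) => A yu.1 yu.2) = fun yu =>
        (∫ ζ, p yu.1 yu.2 ζ * f₀ yu.2 ζ)⁻¹ • ∫ ζ, (p yu.1 yu.2 ζ * f₀ yu.2 ζ) • a yu.1 yu.2 ζ := by
      funext yu; exact hA yu.1 yu.2
    rw [this]
    exact hD_meas.inv.smul hI_meas
  -- total mass of the joint density is 1
  have hmass : ∫⁻ x, ENNReal.ofReal (d x) = 1 := by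
    have h1 : (Measure.map (fun ω => (Y ω, U ω, Z ω)) P) Set.univ = 1 := by
      rw [Measure.map_apply hT MeasurableSet.univ]; simp
    rw [hjoint, withDensity_apply _ MeasurableSet.univ, setLIntegral_univ] at h1
    exact h1
  -- basic integrable functions on the product space
  have hd_int : Integrable d volume := by
    refine ⟨hd_meas.aestronglyMeasurable, ?_⟩
    rw [hasFiniteIntegral_iff_ofReal (Filter.Eventually.of_forall hd_nonneg)]
    rw [hmass]; exact ENNReal.one_lt_top
  set q : ℝ × (Fin mu → ℝ) × (Fin mz → ℝ) → Fin p' → ℝ :=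
    fun x => d x • a x.1 x.2.1 x.2.2 with hq_def
  have hq_meas : Measurable q := hd_meas.smul hameas
  have hq_norm : ∀ x, ‖q x‖ = ‖a x.1 x.2.1 x.2.2‖ * d x := by
    intro x
    rw [hq_def, norm_smul, Real.norm_of_nonneg (hd_nonneg x), mul_comm]
  have hq_int : Integrable q volume := by
    refine ⟨hq_meas.aestronglyMeasurable, ?_⟩
    rw [hasFiniteIntegral_iff_norm]
    have : ∀ x, ENNReal.ofReal ‖q x‖ = ENNReal.ofReal (‖a x.1 x.2.1 x.2.2‖ * d x) := by
      intro x; rw [hq_norm]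
    simpa only [this] using haint
  -- product structure of the volume on the triple product
  have hvol : (volume : Measure (ℝ × (Fin mu → ℝ) × (Fin mz → ℝ))) =
      (volume : Measure ℝ).prod (volume : Measure ((Fin mu → ℝ) × (Fin mz → ℝ))) :=
    Measure.volume_eq_prod _ _
  have hvol2 : (volume : Measure ((Fin mu → ℝ) × (Fin mz → ℝ))) =
      (volume : Measure (Fin mu → ℝ)).prod (volume : Measure (Fin mz → ℝ)) :=
    Measure.volume_eq_prod _ _
  -- a.e. slice integrability
  have hq_ae : ∀ᵐ y : ℝ, ∀ᵐ u : Fin mu → ℝ,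
      Integrable (fun ζ => (p y u ζ * f₀ u ζ) • a y u ζ) volume := by
    have hq_int' : Integrable q ((volume : Measure ℝ).prod
        (volume : Measure ((Fin mu → ℝ) × (Fin mz → ℝ)))) := by rwa [← hvol]
    filter_upwards [hq_int'.prod_right_ae] with y hy
    have hy' : Integrable (fun w : (Fin mu → ℝ) × (Fin mz → ℝ) => q (y, w))
        ((volume : Measure (Fin mu → ℝ)).prod (volume : Measure (Fin mz → ℝ))) := by
      rwa [← hvol2]
    filter_upwards [hy'.prod_right_ae] with u hu
    exact hu
  have hd_ae : ∀ᵐ y : ℝ, ∀ᵐ u : Fin mu → ℝ,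
      Integrable (fun ζ => p y u ζ * f₀ u ζ) volume := by
    have hd_int' : Integrable d ((volume : Measure ℝ).prod
        (volume : Measure ((Fin mu → ℝ) × (Fin mz → ℝ)))) := by rwa [← hvol]
    filter_upwards [hd_int'.prod_right_ae] with y hy
    have hy' : Integrable (fun w : (Fin mu → ℝ) × (Fin mz → ℝ) => d (y, w))
        ((volume : Measure (Fin mu → ℝ)).prod (volume : Measure (Fin mz → ℝ))) := by
      rwa [← hvol2]
    filter_upwards [hy'.prod_right_ae] with u hu
    exact hu
  -- the key pointwise identity and bound
  have key : ∀ y u, Integrable (fun ζ => (p y u ζ * f₀ u ζ) • a y u ζ) volume →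
      Integrable (fun ζ => p y u ζ * f₀ u ζ) volume →
      (∀ i, A y u i * (∫ ζ, p y u ζ * f₀ u ζ) = ∫ ζ, (p y u ζ * f₀ u ζ) * a y u ζ i) ∧
      ‖A y u‖ * (∫ ζ, p y u ζ * f₀ u ζ) ≤ ∫ ζ, (p y u ζ * f₀ u ζ) * ‖a y u ζ‖ := by
    intro y u h1 h2
    have hdz_nonneg : ∀ ζ, 0 ≤ p y u ζ * f₀ u ζ :=
      fun ζ => mul_nonneg (hpnonneg _ _ _) (hf₀nonneg _ _)
    have hDv_nonneg : 0 ≤ ∫ ζ, p y u ζ * f₀ u ζ := integral_nonneg hdz_nonneg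
    have hIi : ∀ i : Fin p', (∫ ζ, (p y u ζ * f₀ u ζ) • a y u ζ) i =
        ∫ ζ, (p y u ζ * f₀ u ζ) * a y u ζ i := by
      intro i
      have := (ContinuousLinearMap.proj (R := ℝ)
        (φ := fun _ : Fin p' => ℝ) i).integral_comp_comm h1
      simpa [ContinuousLinearMap.proj_apply, smul_eq_mul] using this.symm
    constructor
    · intro i
      rw [hA y u]
      rcases eq_or_ne (∫ ζ, p y u ζ * f₀ u ζ) 0 with h0 | h0
      · have hzero : (fun ζ => p y u ζ * f₀ u ζ) =ᵐ[volume] 0 :=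
          (integral_eq_zero_iff_of_nonneg hdz_nonneg h2).mp h0
        have : ∫ ζ, (p y u ζ * f₀ u ζ) * a y u ζ i = 0 := by
          apply integral_eq_zero_of_ae
          filter_upwards [hzero] with ζ hζ
          simp [hζ]
        rw [this, h0, mul_zero]
      · rw [Pi.smul_apply, smul_eq_mul, hIi i]
        field_simp
    · rw [hA y u]
      have hnorm : ‖(∫ ζ, p y u ζ * f₀ u ζ)⁻¹ • ∫ ζ, (p y u ζ * f₀ u ζ) • a y u ζ‖ =
          (∫ ζ, p y u ζ * f₀ u ζ)⁻¹ * ‖∫ ζ, (p y u ζ * f₀ u ζ) • a y u ζ‖ := by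
        rw [norm_smul, Real.norm_of_nonneg (inv_nonneg.mpr hDv_nonneg)]
      rw [hnorm]
      have hbound : ‖∫ ζ, (p y u ζ * f₀ u ζ) • a y u ζ‖ ≤
          ∫ ζ, (p y u ζ * f₀ u ζ) * ‖a y u ζ‖ := by
        refine (norm_integral_le_integral_norm _).trans_eq ?_
        refine integral_congr_ae (Filter.Eventually.of_forall fun ζ => ?_)
        simp only [norm_smul, Real.norm_of_nonneg (hdz_nonneg ζ)]
      rcases eq_or_ne (∫ ζ, p y u ζ * f₀ u ζ) 0 with h0 | h0
      · rw [h0, mul_zero]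
        exact integral_nonneg fun ζ => mul_nonneg (hdz_nonneg ζ) (norm_nonneg _)
      · calc (∫ ζ, p y u ζ * f₀ u ζ)⁻¹ * ‖∫ ζ, (p y u ζ * f₀ u ζ) • a y u ζ‖ *
            (∫ ζ, p y u ζ * f₀ u ζ)
            = ‖∫ ζ, (p y u ζ * f₀ u ζ) • a y u ζ‖ := by field_simp
          _ ≤ _ := hbound
  -- integrability of d • A on the product space
  have hdz_meas : ∀ (y : ℝ) (u : Fin mu → ℝ), Measurable fun ζ => p y u ζ * f₀ u ζ :=
    fun y u => hd_meas.comp (measurable_const.prodMk (measurable_const.prodMk measurable_id))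
  have hqA_meas : Measurable fun x : ℝ × (Fin mu → ℝ) × (Fin mz → ℝ) => d x • A x.1 x.2.1 :=
    hd_meas.smul (hA_meas.comp (measurable_fst.prodMk measurable_snd.fst))
  have hqA_int : Integrable (fun x : ℝ × (Fin mu → ℝ) × (Fin mz → ℝ) =>
      d x • A x.1 x.2.1) volume := by
    refine ⟨hqA_meas.aestronglyMeasurable, ?_⟩
    rw [hasFiniteIntegral_iff_norm]
    have hFmeas : Measurable fun x : ℝ × (Fin mu → ℝ) × (Fin mz → ℝ) =>
        ENNReal.ofReal (d x) * ENNReal.ofReal ‖A x.1 x.2.1‖ :=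
      hd_meas.ennreal_ofReal.mul
        ((hA_meas.comp (measurable_fst.prodMk measurable_snd.fst)).norm.ennreal_ofReal)
    have hmid : (∫⁻ x : ℝ × (Fin mu → ℝ) × (Fin mz → ℝ),
        ENNReal.ofReal (d x) * ENNReal.ofReal ‖A x.1 x.2.1‖)
        ≤ ∫⁻ x : ℝ × (Fin mu → ℝ) × (Fin mz → ℝ),
          ENNReal.ofReal (‖a x.1 x.2.1 x.2.2‖ * d x) := by
      have hGmeas : Measurable fun x : ℝ × (Fin mu → ℝ) × (Fin mz → ℝ) =>
          ENNReal.ofReal (‖a x.1 x.2.1 x.2.2‖ * d x) := (hameas.norm.mul hd_meas).ennreal_ofReal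
      rw [hvol, hvol2, lintegral_prod _ hFmeas.aemeasurable, lintegral_prod _ hGmeas.aemeasurable]
      refine lintegral_mono_ae ?_
      filter_upwards [hq_ae, hd_ae] with y hyq hyd
      have hFy : Measurable fun w : (Fin mu → ℝ) × (Fin mz → ℝ) =>
          ENNReal.ofReal (d (y, w)) * ENNReal.ofReal ‖A (y, w).1 (y, w).2.1‖ :=
        hFmeas.comp measurable_prodMk_left
      have hGy : Measurable fun w : (Fin mu → ℝ) × (Fin mz → ℝ) =>
          ENNReal.ofReal (‖a (y, w).1 (y, w).2.1 (y, w).2.2‖ * d (y, w)) :=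
        hGmeas.comp measurable_prodMk_left
      rw [lintegral_prod _ hFy.aemeasurable, lintegral_prod _ hGy.aemeasurable]
      refine lintegral_mono_ae ?_
      filter_upwards [hyq, hyd] with u h1 h2
      have hdz_nonneg : ∀ ζ, 0 ≤ p y u ζ * f₀ u ζ :=
        fun ζ => mul_nonneg (hpnonneg _ _ _) (hf₀nonneg _ _)
      have hDnn : 0 ≤ ∫ ζ, p y u ζ * f₀ u ζ := integral_nonneg hdz_nonneg
      have hint : Integrable (fun ζ => (p y u ζ * f₀ u ζ) * ‖a y u ζ‖) volume := by
        refine h1.norm.congr (Filter.Eventually.of_forall fun ζ => ?_)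
        simp only [norm_smul, Real.norm_of_nonneg (hdz_nonneg ζ)]
      have main : (∫⁻ ζ, ENNReal.ofReal (p y u ζ * f₀ u ζ) * ENNReal.ofReal ‖A y u‖)
          ≤ ∫⁻ ζ, ENNReal.ofReal (‖a y u ζ‖ * (p y u ζ * f₀ u ζ)) := by
        calc (∫⁻ ζ, ENNReal.ofReal (p y u ζ * f₀ u ζ) * ENNReal.ofReal ‖A y u‖)
            = (∫⁻ ζ, ENNReal.ofReal (p y u ζ * f₀ u ζ)) * ENNReal.ofReal ‖A y u‖ :=
              lintegral_mul_const _ (hdz_meas y u).ennreal_ofReal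
          _ = ENNReal.ofReal (∫ ζ, p y u ζ * f₀ u ζ) * ENNReal.ofReal ‖A y u‖ := by
              rw [ofReal_integral_eq_lintegral_ofReal h2
                (Filter.Eventually.of_forall hdz_nonneg)]
          _ = ENNReal.ofReal (‖A y u‖ * ∫ ζ, p y u ζ * f₀ u ζ) :=
              (mul_comm _ _).trans (ENNReal.ofReal_mul' hDnn).symm
          _ ≤ ENNReal.ofReal (∫ ζ, (p y u ζ * f₀ u ζ) * ‖a y u ζ‖) :=
              ENNReal.ofReal_le_ofReal ((key y u h1 h2).2)
          _ = ∫⁻ ζ, ENNReal.ofReal ((p y u ζ * f₀ u ζ) * ‖a y u ζ‖) :=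
              ofReal_integral_eq_lintegral_ofReal hint
                (Filter.Eventually.of_forall fun ζ =>
                  mul_nonneg (hdz_nonneg ζ) (norm_nonneg _))
          _ = ∫⁻ ζ, ENNReal.ofReal (‖a y u ζ‖ * (p y u ζ * f₀ u ζ)) :=
              lintegral_congr fun ζ => by rw [mul_comm]
      exact main
    calc (∫⁻ x : ℝ × (Fin mu → ℝ) × (Fin mz → ℝ), ENNReal.ofReal ‖d x • A x.1 x.2.1‖)
        = ∫⁻ x, ENNReal.ofReal (d x) * ENNReal.ofReal ‖A x.1 x.2.1‖ := by
          refine lintegral_congr fun x => ?_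
          rw [norm_smul, Real.norm_of_nonneg (hd_nonneg x), ENNReal.ofReal_mul (hd_nonneg x)]
      _ ≤ ∫⁻ x, ENNReal.ofReal (‖a x.1 x.2.1 x.2.2‖ * d x) := hmid
      _ < ⊤ := haint
    -- conditional-expectation setup
  have hm : MeasurableSpace.comap (fun ω => (Y ω, U ω, Z ω)) inferInstance
      ≤ (inferInstance : MeasurableSpace Ω) := hT.comap_le
  haveI : SigmaFinite (P.trim hm) := by
    have : IsFiniteMeasure (P.trim hm) := isFiniteMeasure_trim hm
    infer_instance
  have hTm : Measurable[MeasurableSpace.comap (fun ω => (Y ω, U ω, Z ω)) inferInstance]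
      fun ω => (Y ω, U ω, Z ω) := Measurable.of_comap_le le_rfl
  have hR_int : Integrable R P := by
    refine (integrable_const (1 : ℝ)).mono' hRmeas.aestronglyMeasurable
      (Filter.Eventually.of_forall fun ω => ?_)
    rcases hR01 ω with h | h <;> simp [h]
  -- integrability of the full vector integrand
  have hproj12 : Measurable fun x : ℝ × (Fin mu → ℝ) × (Fin mz → ℝ) => (x.1, x.2.1) :=
    measurable_fst.prodMk measurable_snd.fst
  have hg_meas : Measurable fun x : ℝ × (Fin mu → ℝ) × (Fin mz → ℝ) =>
      a x.1 x.2.1 x.2.2 - A x.1 x.2.1 := hameas.sub (hA_meas.comp hproj12)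
  have hdg_int : Integrable (fun x : ℝ × (Fin mu → ℝ) × (Fin mz → ℝ) =>
      d x • (a x.1 x.2.1 x.2.2 - A x.1 x.2.1)) volume := by
    refine (hq_int.sub hqA_int).congr (Filter.Eventually.of_forall fun x => ?_)
    exact (smul_sub (d x) _ _).symm
  have hgT_int : Integrable (fun ω => a (Y ω) (U ω) (Z ω) - A (Y ω) (U ω)) P := by
    have h1 : Integrable (fun x : ℝ × (Fin mu → ℝ) × (Fin mz → ℝ) =>
        a x.1 x.2.1 x.2.2 - A x.1 x.2.1) (Measure.map (fun ω => (Y ω, U ω, Z ω)) P) := by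
      rw [hjoint]
      rw [show (fun x : ℝ × (Fin mu → ℝ) × (Fin mz → ℝ) =>
          ENNReal.ofReal (p x.1 x.2.1 x.2.2 * f₀ x.2.1 x.2.2)) =
          fun x => (((d x).toNNReal : ℝ≥0) : ℝ≥0∞) from rfl]
      rw [integrable_withDensity_iff_integrable_smul hd_meas.real_toNNReal]
      refine hdg_int.congr (Filter.Eventually.of_forall fun x => ?_)
      simp only [NNReal.smul_def, Real.coe_toNNReal _ (hd_nonneg x)]
    exact (integrable_map_measure hg_meas.aestronglyMeasurable hT.aemeasurable).mp h1
  have hint_main : Integrable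
      (fun ω => R ω • (a (Y ω) (U ω) (Z ω) - A (Y ω) (U ω))) P := by
    refine hgT_int.norm.mono'
      (hRmeas.aestronglyMeasurable.smul hgT_int.aestronglyMeasurable)
      (Filter.Eventually.of_forall fun ω => ?_)
    rw [norm_smul]
    rcases hR01 ω with h | h <;> simp [h]
  -- componentwise reduction
  funext i
  have happ : (∫ ω, R ω • (a (Y ω) (U ω) (Z ω) - A (Y ω) (U ω)) ∂P) i =
      ∫ ω, R ω * (a (Y ω) (U ω) (Z ω) i - A (Y ω) (U ω) i) ∂P := by
    have := (ContinuousLinearMap.proj (R := ℝ)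
      (φ := fun _ : Fin p' => ℝ) i).integral_comp_comm hint_main
    simp only [ContinuousLinearMap.proj_apply, Pi.smul_apply, Pi.sub_apply,
      smul_eq_mul] at this
    exact this.symm
  rw [happ, Pi.zero_apply]
  set gi : ℝ × (Fin mu → ℝ) × (Fin mz → ℝ) → ℝ :=
    fun x => a x.1 x.2.1 x.2.2 i - A x.1 x.2.1 i with hgi_def
  have hgi_meas : Measurable gi :=
    ((measurable_pi_apply i).comp hameas).sub
      ((measurable_pi_apply i).comp (hA_meas.comp hproj12))
  have hgiT_int : Integrable (fun ω => gi (Y ω, U ω, Z ω)) P := by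
    have := (ContinuousLinearMap.proj (R := ℝ)
      (φ := fun _ : Fin p' => ℝ) i).integrable_comp hgT_int
    simpa [ContinuousLinearMap.proj_apply, Pi.sub_apply, hgi_def] using this
  have hfR_int : Integrable (fun ω => gi (Y ω, U ω, Z ω) * R ω) P := by
    refine hgiT_int.norm.mono'
      (((hgi_meas.comp hT).mul hRmeas).aestronglyMeasurable)
      (Filter.Eventually.of_forall fun ω => ?_)
    rw [norm_mul]
    rcases hR01 ω with h | h <;> simp [h]
  have hGm : StronglyMeasurable[MeasurableSpace.comap (fun ω => (Y ω, U ω, Z ω)) inferInstance]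
      fun ω => gi (Y ω, U ω, Z ω) :=
    (hgi_meas.comp hTm).stronglyMeasurable
  have hmul := condExp_mul_of_stronglyMeasurable_left (μ := P) hGm hfR_int hR_int
  have e1 : ∫ ω, gi (Y ω, U ω, Z ω) * R ω ∂P =
      ∫ ω, gi (Y ω, U ω, Z ω) * π (Y ω) (U ω) ∂P := by
    rw [← integral_condExp hm (f := fun ω => gi (Y ω, U ω, Z ω) * R ω)]
    refine integral_congr_ae (hmul.trans ?_)
    filter_upwards [hA2] with ω hω
    simp only [Pi.mul_apply]
    rw [hω]
  have hgiπ_meas : Measurable fun x : ℝ × (Fin mu → ℝ) × (Fin mz → ℝ) =>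
      gi x * π x.1 x.2.1 := hgi_meas.mul (hπmeas.comp hproj12)
  have e2 : ∫ ω, gi (Y ω, U ω, Z ω) * π (Y ω) (U ω) ∂P =
      ∫ x : ℝ × (Fin mu → ℝ) × (Fin mz → ℝ), gi x * π x.1 x.2.1
        ∂(Measure.map (fun ω => (Y ω, U ω, Z ω)) P) :=
    (integral_map hT.aemeasurable hgiπ_meas.aestronglyMeasurable).symm
  have e3 : (∫ x : ℝ × (Fin mu → ℝ) × (Fin mz → ℝ), gi x * π x.1 x.2.1
        ∂(Measure.map (fun ω => (Y ω, U ω, Z ω)) P))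
      = ∫ x : ℝ × (Fin mu → ℝ) × (Fin mz → ℝ), π x.1 x.2.1 * (gi x * d x) := by
    rw [hjoint]
    rw [show (fun x : ℝ × (Fin mu → ℝ) × (Fin mz → ℝ) =>
        ENNReal.ofReal (p x.1 x.2.1 x.2.2 * f₀ x.2.1 x.2.2)) =
        fun x => (((d x).toNNReal : ℝ≥0) : ℝ≥0∞) from rfl]
    rw [integral_withDensity_eq_integral_smul hd_meas.real_toNNReal]
    refine integral_congr_ae (Filter.Eventually.of_forall fun x => ?_)
    simp only [NNReal.smul_def, Real.coe_toNNReal _ (hd_nonneg x), smul_eq_mul]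
    ring
  have e4 : (∫ x : ℝ × (Fin mu → ℝ) × (Fin mz → ℝ), π x.1 x.2.1 * (gi x * d x)) = 0 := by
    have hh_meas : Measurable fun x : ℝ × (Fin mu → ℝ) × (Fin mz → ℝ) =>
        π x.1 x.2.1 * (gi x * d x) :=
      (hπmeas.comp hproj12).mul (hgi_meas.mul hd_meas)
    have hh_int : Integrable (fun x : ℝ × (Fin mu → ℝ) × (Fin mz → ℝ) =>
        π x.1 x.2.1 * (gi x * d x)) volume := by
      refine hdg_int.norm.mono' hh_meas.aestronglyMeasurable
        (Filter.Eventually.of_forall fun x => ?_)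
      have h1 : ‖π x.1 x.2.1‖ ≤ 1 := by
        rw [Real.norm_eq_abs]
        exact abs_le.mpr ⟨by linarith [(hπrange x.1 x.2.1).1], (hπrange x.1 x.2.1).2⟩
      have h2 : ‖gi x‖ ≤ ‖a x.1 x.2.1 x.2.2 - A x.1 x.2.1‖ := by
        have := norm_le_pi_norm (a x.1 x.2.1 x.2.2 - A x.1 x.2.1) i
        simpa [hgi_def] using this
      rw [norm_smul, Real.norm_of_nonneg (hd_nonneg x), norm_mul, norm_mul,
        Real.norm_of_nonneg (hd_nonneg x)]
      calc ‖π x.1 x.2.1‖ * (‖gi x‖ * d x)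
          ≤ 1 * (‖a x.1 x.2.1 x.2.2 - A x.1 x.2.1‖ * d x) := by
            refine mul_le_mul h1 (mul_le_mul_of_nonneg_right h2 (hd_nonneg x))
              (mul_nonneg (norm_nonneg _) (hd_nonneg x)) zero_le_one
        _ = d x * ‖a x.1 x.2.1 x.2.2 - A x.1 x.2.1‖ := by ring
    rw [hvol, hvol2] at hh_int ⊢
    rw [integral_prod _ hh_int]
    refine integral_eq_zero_of_ae ?_
    filter_upwards [hh_int.prod_right_ae, hq_ae, hd_ae] with y hy hyq hyd
    rw [integral_prod _ hy]
    refine integral_eq_zero_of_ae ?_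
    filter_upwards [hyq, hyd] with u h1 h2
    have hcomp : Integrable (fun ζ => (p y u ζ * f₀ u ζ) * a y u ζ i) volume := by
      have := (ContinuousLinearMap.proj (R := ℝ)
        (φ := fun _ : Fin p' => ℝ) i).integrable_comp h1
      simpa [ContinuousLinearMap.proj_apply, smul_eq_mul] using this
    have hAd : Integrable (fun ζ => A y u i * (p y u ζ * f₀ u ζ)) volume := h2.const_mul _
    have hz : ∫ ζ, π y u * ((a y u ζ i - A y u i) * (p y u ζ * f₀ u ζ)) = 0 := by
      rw [integral_const_mul]
      have hsplit : (∫ ζ, (a y u ζ i - A y u i) * (p y u ζ * f₀ u ζ))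
          = (∫ ζ, (p y u ζ * f₀ u ζ) * a y u ζ i)
            - A y u i * ∫ ζ, p y u ζ * f₀ u ζ := by
        rw [show (fun ζ => (a y u ζ i - A y u i) * (p y u ζ * f₀ u ζ)) = fun ζ =>
            (p y u ζ * f₀ u ζ) * a y u ζ i - A y u i * (p y u ζ * f₀ u ζ) from
          funext fun ζ => by ring]
        rw [integral_sub hcomp hAd, integral_const_mul]
      rw [hsplit, (key y u h1 h2).1 i, sub_self, mul_zero]
    exact hz
  calc ∫ ω, R ω * (a (Y ω) (U ω) (Z ω) i - A (Y ω) (U ω) i) ∂P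
      = ∫ ω, gi (Y ω, U ω, Z ω) * R ω ∂P := by
        refine integral_congr_ae (Filter.Eventually.of_forall fun ω => ?_)
        simp only [hgi_def]
        ring
    _ = 0 := by rw [e1, e2, e3, e4]
end
end

section
/- Let β̂_n, β̃_n : Ω → ℝ^p be measurable estimator sequences such that β̃_n − β̂_n converges in probability to a fixed vector Δ ∈ ℝ^p with Δ ≠ 0, and let Ŵ_n be random p×p matrices converging in probability (entrywise) to a symmetric positive definite matrix W. Then the test statistic T_n = n (β̃_n − β̂_n)ᵀ Ŵ_n^{-1} (β̃_n − β̂_n) diverges to infinity in probability: for every K > 0, P(T_n > K) → 1 as n → ∞. Consequently, the test that rejects when T_n exceeds any fixed critical value has power tending to one. -/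
open MeasureTheory Filter Matrix

noncomputable section

/-- Convergence in measure of finitely many coordinates implies convergence in measure
of the (finite-)pi-valued function. -/
lemma tendstoInMeasure_pi_of_forall {Ω ι E : Type*} [MeasurableSpace Ω] [Fintype ι]
    [PseudoMetricSpace E] {μ : Measure Ω} {f : ℕ → Ω → ι → E} {g : Ω → ι → E}
    (h : ∀ i, TendstoInMeasure μ (fun n ω => f n ω i) atTop (fun ω => g ω i)) :
    TendstoInMeasure μ f atTop g := by
  intro ε hε
  have hsub : ∀ n, {ω | ε ≤ edist (f n ω) (g ω)} ⊆
      ⋃ i, {ω | ε ≤ edist (f n ω i) (g ω i)} := by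
    intro n ω hω
    by_contra hcon
    simp only [Set.mem_iUnion, Set.mem_setOf_eq, not_exists, not_le] at hcon
    exact absurd (show edist (f n ω) (g ω) < ε by rw [edist_pi_def]; exact (Finset.sup_lt_iff (by simpa using hε)).2 fun i _ => hcon i) (not_lt.2 hω)
  have hbound : ∀ n, μ {ω | ε ≤ edist (f n ω) (g ω)} ≤
      ∑ i, μ {ω | ε ≤ edist (f n ω i) (g ω i)} := by
    intro n
    refine (measure_mono (hsub n)).trans ?_
    simpa [tsum_fintype] using
      measure_iUnion_le (fun i => {ω | ε ≤ edist (f n ω i) (g ω i)})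
  have hsum : Tendsto (fun n => ∑ i, μ {ω | ε ≤ edist (f n ω i) (g ω i)}) atTop (nhds 0) := by
    have := tendsto_finset_sum (Finset.univ : Finset ι) (fun i _ => h i ε hε)
    simpa using this
  exact tendsto_of_tendsto_of_tendsto_of_le_of_le tendsto_const_nhds hsum
    (fun n => zero_le) hbound

/-- Convergence in measure of two functions implies convergence in measure of the pair. -/
lemma tendstoInMeasure_prod_mk {Ω E F : Type*} [MeasurableSpace Ω]
    [PseudoMetricSpace E] [PseudoMetricSpace F] {μ : Measure Ω}
    {f : ℕ → Ω → E} {g : Ω → E} {f' : ℕ → Ω → F} {g' : Ω → F}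
    (hf : TendstoInMeasure μ f atTop g) (hf' : TendstoInMeasure μ f' atTop g') :
    TendstoInMeasure μ (fun n ω => (f n ω, f' n ω)) atTop (fun ω => (g ω, g' ω)) := by
  intro ε hε
  have hsub : ∀ n, {ω | ε ≤ edist ((f n ω, f' n ω)) ((g ω, g' ω))} ⊆
      {ω | ε ≤ edist (f n ω) (g ω)} ∪ {ω | ε ≤ edist (f' n ω) (g' ω)} := by
    intro n ω hω
    simp only [Set.mem_setOf_eq, Prod.edist_eq] at hω
    exact le_max_iff.1 hω
  refine tendsto_of_tendsto_of_tendsto_of_le_of_le tendsto_const_nhds ?_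
    (fun n => zero_le)
    (fun n => (measure_mono (hsub n)).trans (measure_union_le _ _))
  simpa using (hf ε hε).add (hf' ε hε)

instance matrixMeasurableSpace {m n α : Type*} [MeasurableSpace α] :
    MeasurableSpace (Matrix m n α) :=
  inferInstanceAs (MeasurableSpace (m → n → α))

instance matrixOpensMeasurableSpace {m n α : Type*} [Countable m] [Countable n]
    [TopologicalSpace α] [MeasurableSpace α] [OpensMeasurableSpace α]
    [SecondCountableTopology α] :
    OpensMeasurableSpace (Matrix m n α) :=
  inferInstanceAs (OpensMeasurableSpace (m → n → α))

set_option maxHeartbeats 2000000 in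
/-- consistency of the test under a fixed alternative, formalizing
the remark after Theorem 4 of the paper. If `β̃ₙ − β̂ₙ` converges in probability to a
fixed nonzero vector `Δ`, and `Ŵₙ` converges entrywise in probability to a symmetric
positive definite matrix `W`, then `Tₙ = n (β̃ₙ − β̂ₙ)ᵀ Ŵₙ⁻¹ (β̃ₙ − β̂ₙ)` diverges to
infinity in probability: for every `K > 0`, `P(Tₙ > K) → 1`. (Hence the power of the
test at any fixed critical value tends to one; the Lean matrix inverse is `0` on
singular matrices, as in the stated convention.) -/
theorem test_statistic_diverges_under_alternative
    {Ω : Type*} [MeasurableSpace Ω] (P : Measure Ω) [IsProbabilityMeasure P]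
    {p : ℕ}
    (βhat βtilde : ℕ → Ω → Fin p → ℝ)
    (hβhatmeas : ∀ n, Measurable (βhat n))
    (hβtildemeas : ∀ n, Measurable (βtilde n))
    (Δ : Fin p → ℝ) (hΔ : Δ ≠ 0)
    (hconv : TendstoInMeasure P (fun (n : ℕ) ω => βtilde n ω - βhat n ω) atTop
      (fun _ => Δ))
    (W : Matrix (Fin p) (Fin p) ℝ) (hW : W.PosDef)
    (What : ℕ → Ω → Matrix (Fin p) (Fin p) ℝ)
    (hWhatmeas : ∀ n i j, Measurable (fun ω => What n ω i j))
    (hWhatconv : ∀ i j,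
      TendstoInMeasure P (fun (n : ℕ) ω => What n ω i j) atTop (fun _ => W i j)) :
    ∀ K : ℝ, 0 < K →
      Tendsto (fun n : ℕ =>
          P {ω | K < (n : ℝ) *
            ((βtilde n ω - βhat n ω) ⬝ᵥ (What n ω)⁻¹.mulVec (βtilde n ω - βhat n ω))})
        atTop (nhds 1) := by
  intro K hK
  -- notation
  set d : ℕ → Ω → Fin p → ℝ := fun n ω => βtilde n ω - βhat n ω with hd
  -- measurability facts
  have hdmeas : ∀ n, Measurable (d n) := fun n => (hβtildemeas n).sub (hβhatmeas n)
  have hWmeas : ∀ n, Measurable (fun ω => What n ω) := fun n =>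
    measurable_pi_lambda _ fun i => measurable_pi_lambda _ fun j => hWhatmeas n i j
  have hgcont : Continuous fun vM : (Fin p → ℝ) × Matrix (Fin p) (Fin p) ℝ =>
      vM.1 ⬝ᵥ vM.2.mulVec vM.1 :=
    continuous_fst.dotProduct (continuous_snd.matrix_mulVec continuous_fst)
  have hinvmeas : ∀ (n : ℕ) (i j : Fin p), Measurable fun ω => (What n ω)⁻¹ i j := by
    intro n i j
    have heq : (fun ω => (What n ω)⁻¹ i j) =
        fun ω => ((What n ω).det)⁻¹ * (What n ω).adjugate i j := by
      funext ω
      rw [Matrix.inv_def, Matrix.smul_apply, Ring.inverse_eq_inv, smul_eq_mul]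
    rw [heq]
    have hdet : Measurable fun ω => (What n ω).det :=
      (continuous_id.matrix_det).measurable.comp (hWmeas n)
    have hadj : Measurable fun ω => (What n ω).adjugate i j :=
      (((continuous_apply j).comp ((continuous_apply i).comp
        continuous_id.matrix_adjugate)).measurable).comp (hWmeas n)
    exact hdet.inv.mul hadj
  have hdmeas' : ∀ (n : ℕ) (i : Fin p), Measurable fun ω => d n ω i := fun n i =>
    (measurable_pi_apply i).comp (hdmeas n)
  have hTmeas : ∀ n : ℕ, Measurable fun ω =>
      ((n : ℕ) : ℝ) * (d n ω ⬝ᵥ (What n ω)⁻¹.mulVec (d n ω)) := by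
    intro n
    have hq : (fun ω => d n ω ⬝ᵥ (What n ω)⁻¹.mulVec (d n ω)) =
        fun ω => ∑ i, d n ω i * ∑ j, (What n ω)⁻¹ i j * d n ω j := by
      funext ω
      simp [dotProduct, Matrix.mulVec]
    refine measurable_const.mul ?_
    rw [hq]
    exact Finset.measurable_sum _ fun i _ => (hdmeas' n i).mul
      (Finset.measurable_sum _ fun j _ => (hinvmeas n i j).mul (hdmeas' n j))
  have hSmeas : ∀ n : ℕ, MeasurableSet
      {ω | K < ((n : ℕ) : ℝ) * (d n ω ⬝ᵥ (What n ω)⁻¹.mulVec (d n ω))} :=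
    fun n => measurableSet_lt measurable_const (hTmeas n)
  -- positivity of the limit quadratic form
  have hdetW : W.det ≠ 0 := hW.det_pos.ne'
  have hWinvcont : ContinuousAt Inv.inv W := by
    refine continuousAt_matrix_inv W ?_
    rw [Ring.inverse_eq_inv']
    exact continuousAt_inv₀ hdetW
  have hc : 0 < Δ ⬝ᵥ W⁻¹.mulVec Δ := by
    have h2 := hW.inv.dotProduct_mulVec_pos hΔ
    rwa [star_trivial] at h2
  -- combined convergence in measure
  have hF : TendstoInMeasure P
      (fun n ω => ((d n ω, fun i j => What n ω i j) : (Fin p → ℝ) × (Fin p → Fin p → ℝ)))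
      atTop (fun _ => (Δ, fun i j => W i j)) :=
    tendstoInMeasure_prod_mk hconv
      (tendstoInMeasure_pi_of_forall fun i =>
        tendstoInMeasure_pi_of_forall fun j => hWhatconv i j)
  -- subsequence argument
  refine tendsto_of_subseq_tendsto fun ns hns => ?_
  have hFn : TendstoInMeasure P
      (fun k ω => ((d (ns k) ω, fun i j => What (ns k) ω i j) :
        (Fin p → ℝ) × (Fin p → Fin p → ℝ)))
      atTop (fun _ => (Δ, fun i j => W i j)) :=
    fun ε hε => (hF ε hε).comp hns
  obtain ⟨ms, hms, hae⟩ := hFn.exists_seq_tendsto_ae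
  refine ⟨ms, ?_⟩
  have hmain : Tendsto (fun k =>
      P {ω | K < ((ns (ms k) : ℕ) : ℝ) *
        (d (ns (ms k)) ω ⬝ᵥ (What (ns (ms k)) ω)⁻¹.mulVec (d (ns (ms k)) ω))})
      atTop (nhds (P Set.univ)) := by
    refine tendsto_measure_of_ae_tendsto_indicator_of_isFiniteMeasure atTop
      MeasurableSet.univ (fun k => hSmeas (ns (ms k))) ?_
    filter_upwards [hae] with ω hω
    have hdω : Tendsto (fun k => d (ns (ms k)) ω) atTop (nhds Δ) :=
      (continuous_fst.tendsto _).comp hω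
    have hMpi : Tendsto (fun k => (fun i j => What (ns (ms k)) ω i j : Fin p → Fin p → ℝ))
        atTop (nhds (fun i j => W i j)) :=
      (continuous_snd.tendsto
        ((Δ, fun i j => W i j) : (Fin p → ℝ) × (Fin p → Fin p → ℝ))).comp hω
    have hMentry : ∀ i j, Tendsto (fun k => What (ns (ms k)) ω i j) atTop (nhds (W i j)) := by
      intro i j
      exact (((continuous_apply j).comp (continuous_apply i)).tendsto _).comp hMpi
    have hMω : Tendsto (fun k => What (ns (ms k)) ω) atTop (nhds W) := by
      exact tendsto_pi_nhds.mpr fun i => tendsto_pi_nhds.mpr fun j => hMentry i j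
    have hMinv : Tendsto (fun k => (What (ns (ms k)) ω)⁻¹) atTop (nhds W⁻¹) :=
      hWinvcont.tendsto.comp hMω
    have hq : Tendsto (fun k =>
        d (ns (ms k)) ω ⬝ᵥ (What (ns (ms k)) ω)⁻¹.mulVec (d (ns (ms k)) ω))
        atTop (nhds (Δ ⬝ᵥ W⁻¹.mulVec Δ)) :=
      (hgcont.tendsto (Δ, W⁻¹)).comp (hdω.prodMk_nhds hMinv)
    have hnn : Tendsto (fun k => ((ns (ms k) : ℕ) : ℝ)) atTop atTop :=
      tendsto_natCast_atTop_atTop.comp (hns.comp hms.tendsto_atTop)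
    have hT : Tendsto (fun k => ((ns (ms k) : ℕ) : ℝ) *
        (d (ns (ms k)) ω ⬝ᵥ (What (ns (ms k)) ω)⁻¹.mulVec (d (ns (ms k)) ω)))
        atTop atTop := hnn.atTop_mul_pos hc hq
    filter_upwards [hT.eventually_gt_atTop K] with k hk
    simpa using hk
  rw [measure_univ] at hmain
  exact hmain
end
end
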